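/- For integers n, m ≥ 3 and positive integers q_1,…,q_n, r_1,…,r_n, s_1,…,s_m, p_1,…,p_m, the strong metric dimension of the modular product satisfies dim_s( K_{n,n}^{−M}(q_1,…,q_n,r_1,…,r_n) ⋄ K_{m,m}^{−M}(s_1,…,s_m,p_1,…,p_m) ) = Σ_{i=1}^{n} ( (q_i + r_i) · Σ_{j=1}^{m} (s_j + p_j) ) − nm. -/

import Mathlib

open SimpleGraph

/-- The closed neighborhood `N[v]` of a vertex. -/
def closedNbr {α : Type*} (G : SimpleGraph α) (v : α) : Set α :=
  insert v (G.neighborSet v)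

/-- The modular product `G ⋄ H`. -/
def modularProduct {α β : Type*} (G : SimpleGraph α) (H : SimpleGraph β) :
    SimpleGraph (α × β) :=
  SimpleGraph.fromRel (fun x y =>
    (x.1 = y.1 ∧ H.Adj x.2 y.2) ∨
    (G.Adj x.1 y.1 ∧ x.2 = y.2) ∨
    (G.Adj x.1 y.1 ∧ H.Adj x.2 y.2) ∨
    (x.1 ≠ y.1 ∧ x.2 ≠ y.2 ∧ ¬ G.Adj x.1 y.1 ∧ ¬ H.Adj x.2 y.2))

/-- `{g, g'}` is a `γ_G`-pair: the closed neighborhoods are disjoint and cover `V(G)`. -/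
def gammaPair {α : Type*} (G : SimpleGraph α) (g g' : α) : Prop :=
  closedNbr G g ∩ closedNbr G g' = ∅ ∧ closedNbr G g ∪ closedNbr G g' = Set.univ

/-- A universal vertex. -/
def IsUniversal {α : Type*} (G : SimpleGraph α) (v : α) : Prop :=
  closedNbr G v = Set.univ

/-- A complete graph: every two distinct vertices are adjacent. -/
def IsCompleteGraph {α : Type*} (G : SimpleGraph α) : Prop :=
  ∀ u v : α, u ≠ v → G.Adj u v

/-- `G` is a disjoint union of two cliques. -/
def TwoCliques {α : Type*} (G : SimpleGraph α) : Prop :=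
  ∃ A B : Set α, A.Nonempty ∧ B.Nonempty ∧ A ∪ B = Set.univ ∧ A ∩ B = ∅ ∧
    (∀ u ∈ A, ∀ v ∈ A, u ≠ v → G.Adj u v) ∧
    (∀ u ∈ B, ∀ v ∈ B, u ≠ v → G.Adj u v) ∧
    (∀ u ∈ A, ∀ v ∈ B, ¬ G.Adj u v)

/-- `u` and `v` are mutually maximally distant in `X`. -/
def MMD {α : Type*} (X : SimpleGraph α) (u v : α) : Prop :=
  (∀ w, X.Adj u w → X.edist w v ≤ X.edist u v) ∧
  (∀ w, X.Adj v w → X.edist w u ≤ X.edist u v)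

/-- A strong resolving set of `X`. -/
def IsStrongResolvingSet {α : Type*} (X : SimpleGraph α) (S : Set α) : Prop :=
  ∀ u v : α, u ≠ v → ∃ w ∈ S,
    X.dist u w = X.dist u v + X.dist v w ∨ X.dist v w = X.dist v u + X.dist u w

/-- The strong metric dimension of `X`. -/
noncomputable def sdim {α : Type*} (X : SimpleGraph α) : ℕ :=
  sInf {n | ∃ S : Set α, S.ncard = n ∧ IsStrongResolvingSet X S}

/-- The star `K_{1,n}`: the center is `none`, the leaves are `some i`. -/
def starGraph (n : ℕ) : SimpleGraph (Option (Fin n)) :=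
  SimpleGraph.fromRel (fun u v => u = none ∧ v ≠ none)

/-- The vertex cover number `β(X)`. -/
noncomputable def vertexCoverNumber {γ : Type*} (X : SimpleGraph γ) : ℕ :=
  sInf {n | ∃ C : Set γ, C.ncard = n ∧ ∀ u v, X.Adj u v → u ∈ C ∨ v ∈ C}


/-- `K_{n,n}^{-M}(q_1,…,q_n,r_1,…,r_n)`: the vertex `x_i` of `K_{n,n}` minus a perfect
matching is blown up into a clique on `q i` vertices and `y_i` into a clique on `r i`
vertices.  A vertex is a pair: a block `(i, b)` (side `b`, index `i`) together with a
vertex of the corresponding clique. -/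
def blownBip (n : ℕ) (q r : Fin n → ℕ) :
    SimpleGraph (Σ p : Fin n × Bool, Fin (if p.2 then r p.1 else q p.1)) :=
  SimpleGraph.fromRel (fun u v => u.1 = v.1 ∨ (u.1.2 ≠ v.1.2 ∧ u.1.1 ≠ v.1.1))


/-- Block membership relation: `a` is in the closed neighborhood pattern of a vertex
in block `b` of a blown-up `K_{k,k}` minus matching. -/
def bm {k : ℕ} (b b' : Fin k × Bool) : Prop :=
  b = b' ∨ (b.2 ≠ b'.2 ∧ b.1 ≠ b'.1)

instance {k : ℕ} (b b' : Fin k × Bool) : Decidable (bm b b') := by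
  unfold bm; infer_instance

lemma bm_refl {k : ℕ} (b : Fin k × Bool) : bm b b := Or.inl rfl

lemma bm_comm {k : ℕ} (b b' : Fin k × Bool) : bm b b' ↔ bm b' b := by
  unfold bm
  constructor <;> rintro (h | ⟨h1, h2⟩)
  · exact Or.inl h.symm
  · exact Or.inr ⟨h1.symm, h2.symm⟩
  · exact Or.inl h.symm
  · exact Or.inr ⟨h1.symm, h2.symm⟩

lemma bm_flip {k : ℕ} (i : Fin k) (σ : Bool) (b : Fin k × Bool) :
    bm (i, !σ) b ↔ ¬ bm (i, σ) b := by
  obtain ⟨i', σ'⟩ := b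
  by_cases h : i = i' <;> cases σ <;> cases σ' <;>
    simp [bm, Prod.ext_iff, h]

lemma bm_same_idx {k : ℕ} (i : Fin k) (σ σ' : Bool) :
    bm (i, σ) (i, σ') ↔ σ = σ' := by
  cases σ <;> cases σ' <;> simp [bm, Prod.ext_iff]

lemma bm_diff_idx {k : ℕ} {i i' : Fin k} (h : i ≠ i') (σ σ' : Bool) :
    bm (i, σ) (i', σ') ↔ σ ≠ σ' := by
  cases σ <;> cases σ' <;> simp [bm, Prod.ext_iff, h]

lemma exists_third {k : ℕ} (hk : 3 ≤ k) (i i' : Fin k) :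
    ∃ i₂ : Fin k, i₂ ≠ i ∧ i₂ ≠ i' := by
  by_contra h
  push_neg at h
  have : (Finset.univ : Finset (Fin k)) ⊆ {i, i'} := by
    intro x _
    rcases (em (x = i)) with h1 | h1
    · simp [h1]
    · simp [h x h1]
  have := Finset.card_le_card this
  simp at this
  have h2 : ({i, i'} : Finset (Fin k)).card ≤ 2 := Finset.card_insert_le _ _ |>.trans (by simp)
  omega

/-- Adjacency in the modular product, in closed-neighborhood biconditional form. -/
lemma modular_adj {α β : Type*} (G : SimpleGraph α) (H : SimpleGraph β) (x y : α × β) :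
    (modularProduct G H).Adj x y ↔ x ≠ y ∧
      ((x.1 = y.1 ∨ G.Adj x.1 y.1) ↔ (x.2 = y.2 ∨ H.Adj x.2 y.2)) := by
  rw [modularProduct, SimpleGraph.fromRel_adj]
  constructor
  · rintro ⟨hne, h | h⟩
    · refine ⟨hne, ?_⟩
      rcases h with ⟨h1, h2⟩ | ⟨h1, h2⟩ | ⟨h1, h2⟩ | ⟨h1, h2, h3, h4⟩ <;>
        constructor <;> intro hh <;> tauto
    · refine ⟨hne, ?_⟩
      rcases h with ⟨h1, h2⟩ | ⟨h1, h2⟩ | ⟨h1, h2⟩ | ⟨h1, h2, h3, h4⟩ <;>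
        constructor <;> intro hh
      · exact Or.inr (H.adj_symm h2)
      · exact Or.inl h1.symm
      · exact Or.inl h2.symm
      · exact Or.inr (G.adj_symm h1)
      · exact Or.inr (H.adj_symm h2)
      · exact Or.inr (G.adj_symm h1)
      · rcases hh with hh | hh
        · exact absurd hh.symm h1
        · exact absurd (G.adj_symm hh) h3
      · rcases hh with hh | hh
        · exact absurd hh.symm h2
        · exact absurd (H.adj_symm hh) h4
  · rintro ⟨hne, hiff⟩
    refine ⟨hne, Or.inl ?_⟩
    by_cases h1 : x.1 = y.1
    · have h2 : x.2 ≠ y.2 := fun h => hne (Prod.ext h1 h)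
      have := hiff.mp (Or.inl h1)
      rcases this with h | h
      · exact absurd h h2
      · exact Or.inl ⟨h1, h⟩
    · by_cases h2 : x.2 = y.2
      · have := hiff.mpr (Or.inl h2)
        rcases this with h | h
        · exact absurd h h1
        · exact Or.inr (Or.inl ⟨h, h2⟩)
      · by_cases hg : G.Adj x.1 y.1
        · have := hiff.mp (Or.inr hg)
          rcases this with h | h
          · exact absurd h h2
          · exact Or.inr (Or.inr (Or.inl ⟨hg, h⟩))
        · have hh : ¬ H.Adj x.2 y.2 := fun h => (hiff.mpr (Or.inr h)).elim h1 hg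
          exact Or.inr (Or.inr (Or.inr ⟨h1, h2, hg, hh⟩))

/-- Closed neighborhood in `blownBip` is given by `bm` on blocks. -/
lemma blownBip_cn {n : ℕ} {q r : Fin n → ℕ}
    (u v : Σ p : Fin n × Bool, Fin (if p.2 then r p.1 else q p.1)) :
    (u = v ∨ (blownBip n q r).Adj u v) ↔ bm u.1 v.1 := by
  rw [blownBip, SimpleGraph.fromRel_adj]
  constructor
  · rintro (rfl | ⟨hne, h | h⟩)
    · exact bm_refl _
    · rcases h with h | ⟨h1, h2⟩
      · exact Or.inl h
      · exact Or.inr ⟨h1, h2⟩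
    · rcases h with h | ⟨h1, h2⟩
      · exact Or.inl h.symm
      · exact Or.inr ⟨h1.symm, h2.symm⟩
  · intro hbm
    by_cases hne : u = v
    · exact Or.inl hne
    · refine Or.inr ⟨hne, Or.inl ?_⟩
      rcases hbm with h | ⟨h1, h2⟩
      · exact Or.inl h
      · exact Or.inr ⟨h1, h2⟩
section DistLemmas
variable {V : Type*} {X : SimpleGraph V}

lemma walk_length_two_exists {u v : V} (hp : ∃ p : X.Walk u v, p.length = 2) :
    ∃ z, X.Adj u z ∧ X.Adj z v := by
  obtain ⟨p, hp⟩ := hp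
  cases p with
  | nil => simp at hp
  | cons h1 q =>
    cases q with
    | nil => simp at hp
    | cons h2 q2 =>
      have hl : q2.length = 0 := by simp only [SimpleGraph.Walk.length_cons] at hp; omega
      have := q2.eq_of_length_eq_zero hl
      subst this
      exact ⟨_, h1, h2⟩

lemma dist_eq_two {u v z : V} (hne : u ≠ v) (hna : ¬ X.Adj u v)
    (h1 : X.Adj u z) (h2 : X.Adj z v) : X.dist u v = 2 := by
  have hr : X.Reachable u v := ⟨SimpleGraph.Walk.cons h1 (SimpleGraph.Walk.cons h2 SimpleGraph.Walk.nil)⟩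
  have hle : X.dist u v ≤ 2 := by
    have := SimpleGraph.dist_le (SimpleGraph.Walk.cons h1 (SimpleGraph.Walk.cons h2 SimpleGraph.Walk.nil))
    simpa using this
  have h0 : X.dist u v ≠ 0 := fun h => hne (hr.dist_eq_zero_iff.mp h)
  have h1' : X.dist u v ≠ 1 := fun h => hna (SimpleGraph.dist_eq_one_iff_adj.mp h)
  omega

lemma dist_eq_three {u v : V} (hne : u ≠ v) (hna : ¬ X.Adj u v)
    (hnc : ∀ z, ¬ (X.Adj u z ∧ X.Adj z v))
    (hw : ∃ p : X.Walk u v, p.length ≤ 3) : X.dist u v = 3 := by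
  obtain ⟨p, hp⟩ := hw
  have hr : X.Reachable u v := ⟨p⟩
  have hle : X.dist u v ≤ 3 := (SimpleGraph.dist_le p).trans hp
  have h0 : X.dist u v ≠ 0 := fun h => hne (hr.dist_eq_zero_iff.mp h)
  have h1' : X.dist u v ≠ 1 := fun h => hna (SimpleGraph.dist_eq_one_iff_adj.mp h)
  have h2' : X.dist u v ≠ 2 := by
    intro h
    obtain ⟨p2, hp2⟩ := hr.exists_walk_length_eq_dist
    obtain ⟨z, hz1, hz2⟩ := walk_length_two_exists ⟨p2, by omega⟩
    exact hnc z ⟨hz1, hz2⟩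
  omega

lemma twin_dist_le {u v w : V} (tw : ∀ z, z ≠ u → z ≠ v → (X.Adj u z ↔ X.Adj v z))
    (hwu : w ≠ u) (hwv : w ≠ v) (hr : X.Reachable v w) : X.dist u w ≤ X.dist v w := by
  obtain ⟨p, hp⟩ := hr.exists_walk_length_eq_dist
  cases p with
  | nil => exact absurd rfl hwv
  | cons h1 q =>
    rename_i z
    by_cases hzu : z = u
    · calc X.dist u w ≤ q.length := hzu ▸ SimpleGraph.dist_le q
        _ ≤ X.dist v w := by rw [← hp, SimpleGraph.Walk.length_cons]; omega
    · have hzv : z ≠ v := fun h => X.irrefl (h ▸ h1)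
      have hadj : X.Adj u z := (tw z hzu hzv).mpr h1
      calc X.dist u w ≤ (SimpleGraph.Walk.cons hadj q).length := SimpleGraph.dist_le _
        _ = X.dist v w := by rw [SimpleGraph.Walk.length_cons, ← hp, SimpleGraph.Walk.length_cons]

lemma twin_dist {u v w : V} (huv : X.Adj u v)
    (tw : ∀ z, z ≠ u → z ≠ v → (X.Adj u z ↔ X.Adj v z))
    (hwu : w ≠ u) (hwv : w ≠ v) (hr : ∀ a b : V, X.Reachable a b) :
    X.dist u w = X.dist v w := by
  have tw' : ∀ z, z ≠ v → z ≠ u → (X.Adj v z ↔ X.Adj u z) := fun z h1 h2 => (tw z h2 h1).symm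
  exact le_antisymm (twin_dist_le tw hwu hwv (hr v w)) (twin_dist_le tw' hwv hwu (hr u w))

end DistLemmas
lemma bm_eval {k : ℕ} (b b' : Fin k × Bool) :
    bm b b' ↔ ((b.1 = b'.1) ↔ (b.2 = b'.2)) := by
  obtain ⟨i, σ⟩ := b; obtain ⟨i', σ'⟩ := b'
  by_cases h : i = i' <;> cases σ <;> cases σ' <;> simp [bm, Prod.ext_iff, h]

section Main

variable {n m : ℕ} {q r : Fin n → ℕ} {s p : Fin m → ℕ}

/-- A canonical vertex in block `(i, σ)` of `blownBip n q r`. -/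
def bv (q r : Fin n → ℕ) (hq : ∀ i, 1 ≤ q i) (hr : ∀ i, 1 ≤ r i) (i : Fin n) (σ : Bool) :
    Σ pp : Fin n × Bool, Fin (if pp.2 then r pp.1 else q pp.1) :=
  ⟨(i, σ), ⟨0, by have h1 := hq i; have h2 := hr i; cases σ <;> simp <;> omega⟩⟩

@[simp] lemma bv_fst (hq : ∀ i, 1 ≤ q i) (hr : ∀ i, 1 ≤ r i) (i : Fin n) (σ : Bool) :
    (bv q r hq hr i σ).1 = (i, σ) := rfl

lemma adjX (x y : (Σ pp : Fin n × Bool, Fin (if pp.2 then r pp.1 else q pp.1)) ×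
    (Σ pp : Fin m × Bool, Fin (if pp.2 then p pp.1 else s pp.1))) :
    (modularProduct (blownBip n q r) (blownBip m s p)).Adj x y ↔ x ≠ y ∧
      (((x.1.1.1 = y.1.1.1) ↔ (x.1.1.2 = y.1.1.2)) ↔
       ((x.2.1.1 = y.2.1.1) ↔ (x.2.1.2 = y.2.1.2))) := by
  rw [modular_adj, blownBip_cn, blownBip_cn, bm_eval, bm_eval]
lemma ne_of_idx1 {x y : (Σ pp : Fin n × Bool, Fin (if pp.2 then r pp.1 else q pp.1)) ×
    (Σ pp : Fin m × Bool, Fin (if pp.2 then p pp.1 else s pp.1))}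
    (h : x.1.1.1 ≠ y.1.1.1) : x ≠ y := fun e => h (by rw [e])

lemma ne_of_side1 {x y : (Σ pp : Fin n × Bool, Fin (if pp.2 then r pp.1 else q pp.1)) ×
    (Σ pp : Fin m × Bool, Fin (if pp.2 then p pp.1 else s pp.1))}
    (h : x.1.1.2 ≠ y.1.1.2) : x ≠ y := fun e => h (by rw [e])

lemma ne_of_idx2 {x y : (Σ pp : Fin n × Bool, Fin (if pp.2 then r pp.1 else q pp.1)) ×
    (Σ pp : Fin m × Bool, Fin (if pp.2 then p pp.1 else s pp.1))}
    (h : x.2.1.1 ≠ y.2.1.1) : x ≠ y := fun e => h (by rw [e])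

lemma ne_of_side2 {x y : (Σ pp : Fin n × Bool, Fin (if pp.2 then r pp.1 else q pp.1)) ×
    (Σ pp : Fin m × Bool, Fin (if pp.2 then p pp.1 else s pp.1))}
    (h : x.2.1.2 ≠ y.2.1.2) : x ≠ y := fun e => h (by rw [e])

lemma commonNbr (hn : 3 ≤ n) (hm : 3 ≤ m)
    (hq : ∀ i, 1 ≤ q i) (hr : ∀ i, 1 ≤ r i) (hs : ∀ j, 1 ≤ s j) (hp : ∀ j, 1 ≤ p j)
    {x y : (Σ pp : Fin n × Bool, Fin (if pp.2 then r pp.1 else q pp.1)) ×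
      (Σ pp : Fin m × Bool, Fin (if pp.2 then p pp.1 else s pp.1))}
    (hκ : ¬ (x.1.1.1 = y.1.1.1 ∧ x.2.1.1 = y.2.1.1))
    (hna : ¬ (modularProduct (blownBip n q r) (blownBip m s p)).Adj x y) (hne : x ≠ y) :
    ∃ z, (modularProduct (blownBip n q r) (blownBip m s p)).Adj x z ∧
      (modularProduct (blownBip n q r) (blownBip m s p)).Adj z y := by
  obtain ⟨⟨⟨i, sg⟩, kg⟩, ⟨⟨j, th⟩, kh⟩⟩ := x
  obtain ⟨⟨⟨i', sg'⟩, kg'⟩, ⟨⟨j', th'⟩, kh'⟩⟩ := y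
  rw [adjX] at hna
  have hP : ¬ (((i = i') ↔ (sg = sg')) ↔ ((j = j') ↔ (th = th'))) := by
    intro h; exact hna ⟨hne, by simpa using h⟩
  simp only [not_and] at hκ
  by_cases hss : sg = sg'
  · by_cases htt : th = th'
    · -- C3 with both sides equal
      subst hss; subst htt
      obtain ⟨i₂, hi₂, hi₂'⟩ := exists_third hn i i'
      obtain ⟨j₂, hj₂, hj₂'⟩ := exists_third hm j j'
      refine ⟨(bv q r hq hr i₂ (!sg), bv s p hs hp j₂ (!th)), ?_, ?_⟩ <;> rw [adjX]
      · refine ⟨ne_of_idx1 (by simpa using Ne.symm hi₂), ?_⟩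
        simp only [bv_fst]
        cases sg <;> cases th <;> simp [Ne.symm hi₂, Ne.symm hj₂]
      · refine ⟨ne_of_idx1 (by simpa using hi₂'), ?_⟩
        simp only [bv_fst]
        cases sg <;> cases th <;> simp [hi₂', hj₂']
    · -- sides: sg = sg', th ≠ th'
      subst hss
      have hii : i ≠ i' := by
        intro h; subst h
        have hjj : j = j' := by
          by_contra hjj
          exact hP (by simp [hjj, htt])
        exact hκ rfl hjj
      have hjj : j ≠ j' := by
        intro h; subst h
        exact hP (by simp [hii, htt])
      obtain ⟨i₂, hi₂, hi₂'⟩ := exists_third hn i i'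
      refine ⟨(bv q r hq hr i₂ (!sg), ⟨(j, th), kh⟩), ?_, ?_⟩ <;> rw [adjX]
      · refine ⟨ne_of_idx1 (by simpa using Ne.symm hi₂), ?_⟩
        simp only [bv_fst]
        cases sg <;> simp [Ne.symm hi₂]
      · refine ⟨ne_of_idx1 (by simpa using hi₂'), ?_⟩
        simp only [bv_fst]
        cases sg <;> simp [hi₂', hjj, htt]
  · by_cases htt : th = th'
    · -- sides: sg ≠ sg', th = th'
      subst htt
      have hjj : j ≠ j' := by
        intro h; subst h
        have hii : i = i' := by
          by_contra hii
          exact hP (by simp [hii, hss])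
        exact hκ hii rfl
      have hii : i ≠ i' := by
        intro h; subst h
        exact hP (by simp [hjj, hss])
      obtain ⟨j₂, hj₂, hj₂'⟩ := exists_third hm j j'
      refine ⟨(⟨(i, sg), kg⟩, bv s p hs hp j₂ (!th)), ?_, ?_⟩ <;> rw [adjX]
      · refine ⟨ne_of_idx2 (by simpa using Ne.symm hj₂), ?_⟩
        simp only [bv_fst]
        cases th <;> simp [Ne.symm hj₂]
      · refine ⟨ne_of_idx2 (by simpa using hj₂'), ?_⟩
        simp only [bv_fst]
        cases th <;> simp [hj₂', hii, hss]
    · -- C3 with both sides different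
      obtain ⟨i₂, hi₂, hi₂'⟩ := exists_third hn i i'
      obtain ⟨j₂, hj₂, hj₂'⟩ := exists_third hm j j'
      refine ⟨(bv q r hq hr i₂ (!sg), bv s p hs hp j₂ (!th)), ?_, ?_⟩ <;> rw [adjX]
      · refine ⟨ne_of_idx1 (by simpa using Ne.symm hi₂), ?_⟩
        simp only [bv_fst]
        cases sg <;> cases th <;> simp [Ne.symm hi₂, Ne.symm hj₂]
      · refine ⟨ne_of_idx1 (by simpa using hi₂'), ?_⟩
        simp only [bv_fst]
        cases sg <;> cases sg' <;> cases th <;> cases th' <;>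
          simp_all [hi₂', hj₂']
lemma gamma_no_common
    {x y : (Σ pp : Fin n × Bool, Fin (if pp.2 then r pp.1 else q pp.1)) ×
      (Σ pp : Fin m × Bool, Fin (if pp.2 then p pp.1 else s pp.1))}
    (hgi : x.1.1.1 = y.1.1.1) (hhj : x.2.1.1 = y.2.1.1)
    (hflip : (x.1.1.2 = y.1.1.2) ↔ ¬ (x.2.1.2 = y.2.1.2)) :
    ∀ z, ¬ ((modularProduct (blownBip n q r) (blownBip m s p)).Adj x z ∧ (modularProduct (blownBip n q r) (blownBip m s p)).Adj z y) := by
  rintro z ⟨h1, h2⟩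
  rw [adjX] at h1 h2
  obtain ⟨⟨⟨i, sg⟩, kg⟩, ⟨⟨j, th⟩, kh⟩⟩ := x
  obtain ⟨⟨⟨i', sg'⟩, kg'⟩, ⟨⟨j', th'⟩, kh'⟩⟩ := y
  obtain ⟨⟨⟨ia, sa⟩, ka⟩, ⟨⟨ja, ta⟩, kc⟩⟩ := z
  simp only at hgi hhj hflip
  subst hgi; subst hhj
  obtain ⟨-, h1⟩ := h1
  obtain ⟨-, h2⟩ := h2
  simp only at h1 h2
  rw [show (ia = i) ↔ (i = ia) from eq_comm, show (ja = j) ↔ (j = ja) from eq_comm] at h2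
  cases sg <;> cases sg' <;> cases th <;> cases th' <;> cases sa <;> cases ta <;>
    simp_all

lemma gamma_not_adj
    {x y : (Σ pp : Fin n × Bool, Fin (if pp.2 then r pp.1 else q pp.1)) ×
      (Σ pp : Fin m × Bool, Fin (if pp.2 then p pp.1 else s pp.1))}
    (hgi : x.1.1.1 = y.1.1.1) (hhj : x.2.1.1 = y.2.1.1)
    (hflip : (x.1.1.2 = y.1.1.2) ↔ ¬ (x.2.1.2 = y.2.1.2)) :
    ¬ (modularProduct (blownBip n q r) (blownBip m s p)).Adj x y := by
  rw [adjX]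
  rintro ⟨-, h⟩
  obtain ⟨⟨⟨i, sg⟩, kg⟩, ⟨⟨j, th⟩, kh⟩⟩ := x
  obtain ⟨⟨⟨i', sg'⟩, kg'⟩, ⟨⟨j', th'⟩, kh'⟩⟩ := y
  simp only at hgi hhj hflip h
  subst hgi; subst hhj
  cases sg <;> cases sg' <;> cases th <;> cases th' <;> simp_all

lemma gamma_ne
    {x y : (Σ pp : Fin n × Bool, Fin (if pp.2 then r pp.1 else q pp.1)) ×
      (Σ pp : Fin m × Bool, Fin (if pp.2 then p pp.1 else s pp.1))}
    (hflip : (x.1.1.2 = y.1.1.2) ↔ ¬ (x.2.1.2 = y.2.1.2)) : x ≠ y := by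
  by_cases h : x.1.1.2 = y.1.1.2
  · exact ne_of_side2 (hflip.mp h)
  · exact ne_of_side1 h

lemma reach3 (hn : 3 ≤ n) (hm : 3 ≤ m)
    (hq : ∀ i, 1 ≤ q i) (hr : ∀ i, 1 ≤ r i) (hs : ∀ j, 1 ≤ s j) (hp : ∀ j, 1 ≤ p j)
    (x y : (Σ pp : Fin n × Bool, Fin (if pp.2 then r pp.1 else q pp.1)) ×
      (Σ pp : Fin m × Bool, Fin (if pp.2 then p pp.1 else s pp.1))) :
    ∃ pth : (modularProduct (blownBip n q r) (blownBip m s p)).Walk x y, pth.length ≤ 3 := by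
  by_cases hne : x = y
  · subst hne; exact ⟨SimpleGraph.Walk.nil, by simp⟩
  by_cases hadj : (modularProduct (blownBip n q r) (blownBip m s p)).Adj x y
  · exact ⟨SimpleGraph.Walk.cons hadj SimpleGraph.Walk.nil, by simp⟩
  by_cases hκ : x.1.1.1 = y.1.1.1 ∧ x.2.1.1 = y.2.1.1
  · -- same index pair; hop to a fresh index first
    obtain ⟨i₂, hi₂, -⟩ := exists_third hn x.1.1.1 x.1.1.1
    set w1 := (bv q r hq hr i₂ (!x.1.1.2), x.2) with hw1
    have hadj1 : (modularProduct (blownBip n q r) (blownBip m s p)).Adj x w1 := by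
      rw [adjX]
      refine ⟨ne_of_idx1 (by simpa [hw1] using Ne.symm hi₂), ?_⟩
      obtain ⟨⟨⟨i, sg⟩, kg⟩, ⟨⟨j, th⟩, kh⟩⟩ := x
      simp only [hw1, bv_fst] at hi₂ ⊢
      cases sg <;> simp [Ne.symm hi₂]
    have hκ1 : ¬ (w1.1.1.1 = y.1.1.1 ∧ w1.2.1.1 = y.2.1.1) := by
      rintro ⟨h1, -⟩
      exact hi₂ (by simpa [hw1] using h1.trans hκ.1.symm)
    by_cases hadj2 : (modularProduct (blownBip n q r) (blownBip m s p)).Adj w1 y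
    · exact ⟨SimpleGraph.Walk.cons hadj1 (SimpleGraph.Walk.cons hadj2 SimpleGraph.Walk.nil), by simp⟩
    · obtain ⟨z, hz1, hz2⟩ := commonNbr hn hm hq hr hs hp hκ1 hadj2
        (ne_of_idx1 (by simp [hw1]; intro h; exact hi₂ (h.trans hκ.1.symm)))
      exact ⟨SimpleGraph.Walk.cons hadj1 (SimpleGraph.Walk.cons hz1
        (SimpleGraph.Walk.cons hz2 SimpleGraph.Walk.nil)), by simp⟩
  · obtain ⟨z, hz1, hz2⟩ := commonNbr hn hm hq hr hs hp hκ hadj hne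
    exact ⟨SimpleGraph.Walk.cons hz1 (SimpleGraph.Walk.cons hz2 SimpleGraph.Walk.nil), by simp⟩
/-- The adjacency biconditional. -/
def bic {n m : ℕ} {q r : Fin n → ℕ} {s p : Fin m → ℕ}
    (x y : (Σ pp : Fin n × Bool, Fin (if pp.2 then r pp.1 else q pp.1)) ×
      (Σ pp : Fin m × Bool, Fin (if pp.2 then p pp.1 else s pp.1))) : Prop :=
  ((x.1.1.1 = y.1.1.1) ↔ (x.1.1.2 = y.1.1.2)) ↔
    ((x.2.1.1 = y.2.1.1) ↔ (x.2.1.2 = y.2.1.2))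

lemma adjX2 (x y : (Σ pp : Fin n × Bool, Fin (if pp.2 then r pp.1 else q pp.1)) ×
    (Σ pp : Fin m × Bool, Fin (if pp.2 then p pp.1 else s pp.1))) :
    (modularProduct (blownBip n q r) (blownBip m s p)).Adj x y ↔ x ≠ y ∧ bic x y :=
  adjX x y

lemma bic_symm {x y : (Σ pp : Fin n × Bool, Fin (if pp.2 then r pp.1 else q pp.1)) ×
    (Σ pp : Fin m × Bool, Fin (if pp.2 then p pp.1 else s pp.1))} :
    bic x y ↔ bic y x := by
  unfold bic
  rw [show (x.1.1.1 = y.1.1.1) ↔ (y.1.1.1 = x.1.1.1) from eq_comm,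
    show (x.1.1.2 = y.1.1.2) ↔ (y.1.1.2 = x.1.1.2) from eq_comm,
    show (x.2.1.1 = y.2.1.1) ↔ (y.2.1.1 = x.2.1.1) from eq_comm,
    show (x.2.1.2 = y.2.1.2) ↔ (y.2.1.2 = x.2.1.2) from eq_comm]

lemma flip_bic {u w v : (Σ pp : Fin n × Bool, Fin (if pp.2 then r pp.1 else q pp.1)) ×
    (Σ pp : Fin m × Bool, Fin (if pp.2 then p pp.1 else s pp.1))}
    (h1 : w.1.1.1 = u.1.1.1) (h2 : w.2.1.1 = u.2.1.1)
    (hf : (w.1.1.2 = u.1.1.2) ↔ ¬ (w.2.1.2 = u.2.1.2)) :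
    bic w v ↔ ¬ bic u v := by
  obtain ⟨⟨⟨i, sg⟩, kg⟩, ⟨⟨j, th⟩, kh⟩⟩ := u
  obtain ⟨⟨⟨iw, sw⟩, kw⟩, ⟨⟨jw, tw⟩, kw2⟩⟩ := w
  obtain ⟨⟨⟨iv, sv⟩, kv⟩, ⟨⟨jv, tv⟩, kv2⟩⟩ := v
  simp only at h1 h2 hf
  subst h1; subst h2
  unfold bic
  simp only
  cases sg <;> cases th <;> cases sw <;> cases tw <;> cases sv <;> cases tv <;> (try simp_all) <;> tauto

/-- A vertex with the same index pair as `x`, exactly one side flipped,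
and first side `true`. -/
lemma flip_exists (hq : ∀ i, 1 ≤ q i) (hr : ∀ i, 1 ≤ r i)
    (hs : ∀ j, 1 ≤ s j) (hp : ∀ j, 1 ≤ p j)
    (x : (Σ pp : Fin n × Bool, Fin (if pp.2 then r pp.1 else q pp.1)) ×
      (Σ pp : Fin m × Bool, Fin (if pp.2 then p pp.1 else s pp.1))) :
    ∃ w : (Σ pp : Fin n × Bool, Fin (if pp.2 then r pp.1 else q pp.1)) ×
      (Σ pp : Fin m × Bool, Fin (if pp.2 then p pp.1 else s pp.1)),
      w.1.1.1 = x.1.1.1 ∧ w.2.1.1 = x.2.1.1 ∧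
      ((w.1.1.2 = x.1.1.2) ↔ ¬ (w.2.1.2 = x.2.1.2)) ∧ w.1.1.2 = true := by
  obtain ⟨⟨⟨i, sg⟩, kg⟩, ⟨⟨j, th⟩, kh⟩⟩ := x
  cases sg
  · exact ⟨(bv q r hq hr i true, ⟨(j, th), kh⟩), by simp [bv]⟩
  · exact ⟨(⟨(i, true), kg⟩, bv s p hs hp j (!th)), by cases th <;> simp [bv]⟩

lemma twins_adj {x y : (Σ pp : Fin n × Bool, Fin (if pp.2 then r pp.1 else q pp.1)) ×
    (Σ pp : Fin m × Bool, Fin (if pp.2 then p pp.1 else s pp.1))}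
    (hgi : x.1.1.1 = y.1.1.1) (hhj : x.2.1.1 = y.2.1.1)
    (hside : (x.1.1.2 = y.1.1.2) ↔ (x.2.1.2 = y.2.1.2)) (hne : x ≠ y) :
    (modularProduct (blownBip n q r) (blownBip m s p)).Adj x y := by
  rw [adjX2]
  refine ⟨hne, ?_⟩
  obtain ⟨⟨⟨i, sg⟩, kg⟩, ⟨⟨j, th⟩, kh⟩⟩ := x
  obtain ⟨⟨⟨i', sg'⟩, kg'⟩, ⟨⟨j', th'⟩, kh'⟩⟩ := y
  simp only at hgi hhj hside
  subst hgi; subst hhj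
  unfold bic
  simp only
  cases sg <;> cases sg' <;> cases th <;> cases th' <;> (try simp_all) <;> tauto

lemma twins_adj_iff {x y : (Σ pp : Fin n × Bool, Fin (if pp.2 then r pp.1 else q pp.1)) ×
    (Σ pp : Fin m × Bool, Fin (if pp.2 then p pp.1 else s pp.1))}
    (hgi : x.1.1.1 = y.1.1.1) (hhj : x.2.1.1 = y.2.1.1)
    (hside : (x.1.1.2 = y.1.1.2) ↔ (x.2.1.2 = y.2.1.2)) :
    ∀ z, z ≠ x → z ≠ y →
      ((modularProduct (blownBip n q r) (blownBip m s p)).Adj x z ↔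
       (modularProduct (blownBip n q r) (blownBip m s p)).Adj y z) := by
  intro z hzx hzy
  rw [adjX2, adjX2]
  have : bic x z ↔ bic y z := by
    obtain ⟨⟨⟨i, sg⟩, kg⟩, ⟨⟨j, th⟩, kh⟩⟩ := x
    obtain ⟨⟨⟨i', sg'⟩, kg'⟩, ⟨⟨j', th'⟩, kh'⟩⟩ := y
    obtain ⟨⟨⟨ia, sa⟩, ka⟩, ⟨⟨ja, ta⟩, kc⟩⟩ := z
    simp only at hgi hhj hside
    subst hgi; subst hhj
    unfold bic
    simp only
    cases sg <;> cases sg' <;> cases th <;> cases th' <;> cases sa <;> cases ta <;> (try simp_all) <;> tauto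
  constructor
  · rintro ⟨h1, h2⟩; exact ⟨Ne.symm hzy, this.mp h2⟩
  · rintro ⟨h1, h2⟩; exact ⟨Ne.symm hzx, this.mpr h2⟩

lemma distX_two (hn : 3 ≤ n) (hm : 3 ≤ m)
    (hq : ∀ i, 1 ≤ q i) (hr : ∀ i, 1 ≤ r i) (hs : ∀ j, 1 ≤ s j) (hp : ∀ j, 1 ≤ p j)
    {x y : (Σ pp : Fin n × Bool, Fin (if pp.2 then r pp.1 else q pp.1)) ×
      (Σ pp : Fin m × Bool, Fin (if pp.2 then p pp.1 else s pp.1))}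
    (hκ : ¬ (x.1.1.1 = y.1.1.1 ∧ x.2.1.1 = y.2.1.1))
    (hna : ¬ (modularProduct (blownBip n q r) (blownBip m s p)).Adj x y) (hne : x ≠ y) :
    (modularProduct (blownBip n q r) (blownBip m s p)).dist x y = 2 := by
  obtain ⟨z, hz1, hz2⟩ := commonNbr hn hm hq hr hs hp hκ hna hne
  exact dist_eq_two hne hna hz1 hz2

lemma distX_three (hn : 3 ≤ n) (hm : 3 ≤ m)
    (hq : ∀ i, 1 ≤ q i) (hr : ∀ i, 1 ≤ r i) (hs : ∀ j, 1 ≤ s j) (hp : ∀ j, 1 ≤ p j)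
    {x y : (Σ pp : Fin n × Bool, Fin (if pp.2 then r pp.1 else q pp.1)) ×
      (Σ pp : Fin m × Bool, Fin (if pp.2 then p pp.1 else s pp.1))}
    (hgi : x.1.1.1 = y.1.1.1) (hhj : x.2.1.1 = y.2.1.1)
    (hflip : (x.1.1.2 = y.1.1.2) ↔ ¬ (x.2.1.2 = y.2.1.2)) :
    (modularProduct (blownBip n q r) (blownBip m s p)).dist x y = 3 :=
  dist_eq_three (gamma_ne hflip) (gamma_not_adj hgi hhj hflip)
    (gamma_no_common hgi hhj hflip) (reach3 hn hm hq hr hs hp x y)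
lemma not_bic_of_not_adj
    {x y : (Σ pp : Fin n × Bool, Fin (if pp.2 then r pp.1 else q pp.1)) ×
      (Σ pp : Fin m × Bool, Fin (if pp.2 then p pp.1 else s pp.1))}
    (hna : ¬ (modularProduct (blownBip n q r) (blownBip m s p)).Adj x y) (hne : x ≠ y) :
    ¬ bic x y := fun h => hna ((adjX2 x y).mpr ⟨hne, h⟩)

lemma srs_compl (hn : 3 ≤ n) (hm : 3 ≤ m)
    (hq : ∀ i, 1 ≤ q i) (hr : ∀ i, 1 ≤ r i) (hs : ∀ j, 1 ≤ s j) (hp : ∀ j, 1 ≤ p j) :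
    IsStrongResolvingSet (modularProduct (blownBip n q r) (blownBip m s p))
      (Set.range (fun ij : Fin n × Fin m =>
        (bv q r hq hr ij.1 false, bv s p hs hp ij.2 false)))ᶜ := by
  set τ := fun ij : Fin n × Fin m => (bv q r hq hr ij.1 false, bv s p hs hp ij.2 false) with hτ
  have hmem : ∀ w : (Σ pp : Fin n × Bool, Fin (if pp.2 then r pp.1 else q pp.1)) ×
      (Σ pp : Fin m × Bool, Fin (if pp.2 then p pp.1 else s pp.1)),
      w.1.1.2 = true → w ∈ (Set.range τ)ᶜ := by
    rintro w hw ⟨ij, rfl⟩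
    simp [hτ, bv] at hw
  intro u v huv
  by_cases hκ : u.1.1.1 = v.1.1.1 ∧ u.2.1.1 = v.2.1.1
  · have hone : u ∉ Set.range τ ∨ v ∉ Set.range τ := by
      by_contra hcon
      push_neg at hcon
      obtain ⟨⟨ij, hij⟩, ⟨ij', hij'⟩⟩ := hcon
      have : ij = ij' := by
        have h1 : ij.1 = ij'.1 := by
          have := hκ.1; rw [← hij, ← hij'] at this; simpa [hτ, bv] using this
        have h2 : ij.2 = ij'.2 := by
          have := hκ.2; rw [← hij, ← hij'] at this; simpa [hτ, bv] using this
        exact Prod.ext h1 h2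
      exact huv (by rw [← hij, ← hij', this])
    rcases hone with h | h
    · exact ⟨u, h, Or.inr (by rw [SimpleGraph.dist_self]; simp)⟩
    · exact ⟨v, h, Or.inl (by rw [SimpleGraph.dist_self]; simp)⟩
  · by_cases hadj : (modularProduct (blownBip n q r) (blownBip m s p)).Adj u v
    · -- adjacent, different classes: antipode of u
      obtain ⟨w, h1, h2, hf, hside⟩ := flip_exists hq hr hs hp u
      have hf' : (u.1.1.2 = w.1.1.2) ↔ ¬ (u.2.1.2 = w.2.1.2) := by
        rw [show (u.1.1.2 = w.1.1.2) ↔ (w.1.1.2 = u.1.1.2) from eq_comm,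
          show (u.2.1.2 = w.2.1.2) ↔ (w.2.1.2 = u.2.1.2) from eq_comm]
        exact hf
      have d3 : (modularProduct (blownBip n q r) (blownBip m s p)).dist u w = 3 :=
        distX_three hn hm hq hr hs hp h1.symm h2.symm hf'
      have d1 : (modularProduct (blownBip n q r) (blownBip m s p)).dist u v = 1 :=
        SimpleGraph.dist_eq_one_iff_adj.mpr hadj
      have hbuv : bic u v := ((adjX2 u v).mp hadj).2
      have hnwv : ¬ (modularProduct (blownBip n q r) (blownBip m s p)).Adj v w := by
        intro hA
        have hbvw : bic v w := ((adjX2 v w).mp hA).2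
        exact ((flip_bic h1 h2 hf).mp (bic_symm.mp hbvw)) hbuv
      have hκvw : ¬ (v.1.1.1 = w.1.1.1 ∧ v.2.1.1 = w.2.1.1) := by
        rintro ⟨e1, e2⟩
        exact hκ ⟨by rw [h1] at e1; exact e1.symm, by rw [h2] at e2; exact e2.symm⟩
      have hnevw : v ≠ w := fun e => hκvw (by rw [e]; exact ⟨rfl, rfl⟩)
      have d2 : (modularProduct (blownBip n q r) (blownBip m s p)).dist v w = 2 :=
        distX_two hn hm hq hr hs hp hκvw hnwv hnevw
      exact ⟨w, hmem w hside, Or.inl (by rw [d3, d1, d2])⟩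
    · -- non-adjacent, different classes: antipode of v
      obtain ⟨w, h1, h2, hf, hside⟩ := flip_exists hq hr hs hp v
      have hf' : (v.1.1.2 = w.1.1.2) ↔ ¬ (v.2.1.2 = w.2.1.2) := by
        rw [show (v.1.1.2 = w.1.1.2) ↔ (w.1.1.2 = v.1.1.2) from eq_comm,
          show (v.2.1.2 = w.2.1.2) ↔ (w.2.1.2 = v.2.1.2) from eq_comm]
        exact hf
      have d3 : (modularProduct (blownBip n q r) (blownBip m s p)).dist v w = 3 :=
        distX_three hn hm hq hr hs hp h1.symm h2.symm hf'
      have d2 : (modularProduct (blownBip n q r) (blownBip m s p)).dist u v = 2 :=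
        distX_two hn hm hq hr hs hp hκ hadj huv
      have hnbuv : ¬ bic u v := not_bic_of_not_adj hadj huv
      have hneuw : u ≠ w := fun e => hκ ⟨by rw [e, h1], by rw [e, h2]⟩
      have hadj_uw : (modularProduct (blownBip n q r) (blownBip m s p)).Adj u w := by
        rw [adjX2]
        refine ⟨hneuw, ?_⟩
        have : bic w u := (flip_bic h1 h2 hf).mpr (fun hb => hnbuv (bic_symm.mp hb))
        exact bic_symm.mp this
      have d1 : (modularProduct (blownBip n q r) (blownBip m s p)).dist u w = 1 :=
        SimpleGraph.dist_eq_one_iff_adj.mpr hadj_uw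
      refine ⟨w, hmem w hside, Or.inr ?_⟩
      rw [show (modularProduct (blownBip n q r) (blownBip m s p)).dist v u =
        (modularProduct (blownBip n q r) (blownBip m s p)).dist u v from
          SimpleGraph.dist_comm, d3, d2, d1]

lemma srs_lower (hn : 3 ≤ n) (hm : 3 ≤ m)
    (hq : ∀ i, 1 ≤ q i) (hr : ∀ i, 1 ≤ r i) (hs : ∀ j, 1 ≤ s j) (hp : ∀ j, 1 ≤ p j)
    {S : Set ((Σ pp : Fin n × Bool, Fin (if pp.2 then r pp.1 else q pp.1)) ×
      (Σ pp : Fin m × Bool, Fin (if pp.2 then p pp.1 else s pp.1)))}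
    (hS : IsStrongResolvingSet (modularProduct (blownBip n q r) (blownBip m s p)) S) :
    ∀ u v, u ∉ S → v ∉ S → u ≠ v →
      ¬ (u.1.1.1 = v.1.1.1 ∧ u.2.1.1 = v.2.1.1) := by
  intro u v hu hv hne hκ
  obtain ⟨e1, e2⟩ := hκ
  obtain ⟨w, hwS, hw⟩ := hS u v hne
  have hrall : ∀ a b, (modularProduct (blownBip n q r) (blownBip m s p)).Reachable a b :=
    fun a b => ⟨(reach3 hn hm hq hr hs hp a b).choose⟩
  have hle : ∀ a b, (modularProduct (blownBip n q r) (blownBip m s p)).dist a b ≤ 3 := by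
    intro a b
    obtain ⟨pth, hpth⟩ := reach3 hn hm hq hr hs hp a b
    exact (SimpleGraph.dist_le pth).trans hpth
  by_cases hside : (u.1.1.2 = v.1.1.2) ↔ (u.2.1.2 = v.2.1.2)
  · -- true twins
    have hadj := twins_adj e1 e2 hside hne
    have htw := twins_adj_iff (q := q) (r := r) (s := s) (p := p) e1 e2 hside
    have hwu : w ≠ u := fun e => hu (e ▸ hwS)
    have hwv : w ≠ v := fun e => hv (e ▸ hwS)
    have heq : (modularProduct (blownBip n q r) (blownBip m s p)).dist u w =
        (modularProduct (blownBip n q r) (blownBip m s p)).dist v w :=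
      twin_dist hadj htw hwu hwv hrall
    have d1 : (modularProduct (blownBip n q r) (blownBip m s p)).dist u v = 1 :=
      SimpleGraph.dist_eq_one_iff_adj.mpr hadj
    rcases hw with h | h
    · rw [heq, d1] at h; omega
    · rw [show (modularProduct (blownBip n q r) (blownBip m s p)).dist v u =
          (modularProduct (blownBip n q r) (blownBip m s p)).dist u v from
          SimpleGraph.dist_comm, d1, ← heq] at h
      omega
  · -- gamma pair
    have hflip : (u.1.1.2 = v.1.1.2) ↔ ¬ (u.2.1.2 = v.2.1.2) := by
      by_cases h1 : u.1.1.2 = v.1.1.2 <;> by_cases h2 : u.2.1.2 = v.2.1.2 <;> tauto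
    have d3 : (modularProduct (blownBip n q r) (blownBip m s p)).dist u v = 3 :=
      distX_three hn hm hq hr hs hp e1 e2 hflip
    rcases hw with h | h
    · rw [d3] at h
      have h3 := hle u w
      have h0 : (modularProduct (blownBip n q r) (blownBip m s p)).dist v w = 0 := by omega
      exact hv (((hrall v w).dist_eq_zero_iff.mp h0) ▸ hwS)
    · rw [show (modularProduct (blownBip n q r) (blownBip m s p)).dist v u =
          (modularProduct (blownBip n q r) (blownBip m s p)).dist u v from
          SimpleGraph.dist_comm, d3] at h
      have h3 := hle v w
      have h0 : (modularProduct (blownBip n q r) (blownBip m s p)).dist u w = 0 := by omega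
      exact hu (((hrall u w).dist_eq_zero_iff.mp h0) ▸ hwS)

end Main

/-- the strong metric dimension of the modular product of two blown-up
complete bipartite graphs minus perfect matchings. -/

theorem sdim_blownBip_modularProduct (n m : ℕ) (hn : 3 ≤ n) (hm : 3 ≤ m)
    (q r : Fin n → ℕ) (s p : Fin m → ℕ)
    (hq : ∀ i, 1 ≤ q i) (hr : ∀ i, 1 ≤ r i) (hs : ∀ j, 1 ≤ s j) (hp : ∀ j, 1 ≤ p j) :
    sdim (modularProduct (blownBip n q r) (blownBip m s p)) =
      (∑ i : Fin n, (q i + r i) * (∑ j : Fin m, (s j + p j))) - n * m := by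
  classical
  set τ := fun ij : Fin n × Fin m => (bv q r hq hr ij.1 false, bv s p hs hp ij.2 false) with hτ
  have hτinj : Function.Injective τ := by
    rintro ⟨i, j⟩ ⟨i', j'⟩ hij
    have h1 : i = i' := by
      have := congrArg (fun x => x.1.1.1) hij
      simpa [hτ, bv] using this
    have h2 : j = j' := by
      have := congrArg (fun x => x.2.1.1) hij
      simpa [hτ, bv] using this
    simp [h1, h2]
  have hcard : Nat.card ((Σ pp : Fin n × Bool, Fin (if pp.2 then r pp.1 else q pp.1)) ×
      (Σ pp : Fin m × Bool, Fin (if pp.2 then p pp.1 else s pp.1))) =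
      (∑ i : Fin n, (q i + r i)) * (∑ j : Fin m, (s j + p j)) := by
    rw [Nat.card_eq_fintype_card, Fintype.card_prod, Fintype.card_sigma, Fintype.card_sigma]
    have e1 : ∑ pp : Fin n × Bool, Fintype.card (Fin (if pp.2 then r pp.1 else q pp.1)) =
        ∑ i : Fin n, (q i + r i) := by
      rw [Fintype.sum_prod_type]
      refine Finset.sum_congr rfl fun i _ => ?_
      simp [Fintype.sum_bool]
      omega
    have e2 : ∑ pp : Fin m × Bool, Fintype.card (Fin (if pp.2 then p pp.1 else s pp.1)) =
        ∑ j : Fin m, (s j + p j) := by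
      rw [Fintype.sum_prod_type]
      refine Finset.sum_congr rfl fun j _ => ?_
      simp [Fintype.sum_bool]
      omega
    rw [e1, e2]
  have hTcard : (Set.range τ).ncard = n * m := by
    rw [← Set.image_univ, Set.ncard_image_of_injective _ hτinj, Set.ncard_univ]
    simp [Nat.card_eq_fintype_card]
  have hsum := Set.ncard_add_ncard_compl (Set.range τ)
  rw [hTcard, hcard] at hsum
  have hB : (∑ i : Fin n, (q i + r i) * (∑ j : Fin m, (s j + p j))) =
      (∑ i : Fin n, (q i + r i)) * (∑ j : Fin m, (s j + p j)) := by
    rw [← Finset.sum_mul]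
  rw [hB]
  unfold sdim
  apply le_antisymm
  · apply Nat.sInf_le
    exact ⟨(Set.range τ)ᶜ, by omega, srs_compl hn hm hq hr hs hp⟩
  · apply le_csInf
    · exact ⟨(Set.range τ)ᶜ.ncard, (Set.range τ)ᶜ, rfl, srs_compl hn hm hq hr hs hp⟩
    · rintro k ⟨S, rfl, hS⟩
      have hinj : Set.InjOn (fun x => (x.1.1.1, x.2.1.1)) Sᶜ := by
        intro x hx y hy hxy
        by_contra hne
        have := srs_lower hn hm hq hr hs hp hS x y hx hy hne
        simp only at hxy
        exact this ⟨(Prod.ext_iff.mp hxy).1, (Prod.ext_iff.mp hxy).2⟩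
      have hTle : (Sᶜ).ncard ≤ n * m := by
        rw [← Set.ncard_image_of_injOn hinj]
        calc ((fun x => (x.1.1.1, x.2.1.1)) '' Sᶜ).ncard
            ≤ (Set.univ : Set (Fin n × Fin m)).ncard := Set.ncard_le_ncard (Set.subset_univ _)
          _ = n * m := by rw [Set.ncard_univ]; simp [Nat.card_eq_fintype_card]
      have hsum2 := Set.ncard_add_ncard_compl S
      rw [hcard] at hsum2
      omega
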